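/- Let A be a Z-graded commutative ring and p a homogeneous prime such that the graded localization A_p is quasi-standard (respectively standard). Then there exists a homogeneous element t ∈ A \ p such that the localization A_t is quasi-standard (respectively standard). If moreover A is good, t can be chosen of degree 0. -/

import Mathlib

/-- The degree-`d` part of the graded localization `S⁻¹A`: fractions `a/s` with `a` and `s`
homogeneous and `deg a - deg s = d`. -/
def LocGrade {A σ : Type*} [CommRing A] [SetLike σ A] (𝒜 : ℤ → σ) (S : Submonoid A)
    (d : ℤ) : Set (Localization S) :=
  {x | ∃ (a : A) (s : S) (i : ℤ), a ∈ 𝒜 (d + i) ∧ (s : A) ∈ 𝒜 i ∧ x = Localization.mk a s}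

/-- An ideal of the graded localization is homogeneous if it is generated by its
homogeneous elements. -/
def LocIsHomogeneous {A σ : Type*} [CommRing A] [SetLike σ A] (𝒜 : ℤ → σ) (S : Submonoid A)
    (Q : Ideal (Localization S)) : Prop :=
  Q = Ideal.span {x | (∃ d : ℤ, x ∈ LocGrade 𝒜 S d) ∧ x ∈ Q}

/-- The graded localization `S⁻¹A` is good: homogeneous primes are determined by their
degree-zero parts. -/
def LocGood {A σ : Type*} [CommRing A] [SetLike σ A] (𝒜 : ℤ → σ) (S : Submonoid A) : Prop :=
  ∀ Q Q' : Ideal (Localization S), Q.IsPrime → Q'.IsPrime →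
    LocIsHomogeneous 𝒜 S Q → LocIsHomogeneous 𝒜 S Q' →
    (∀ x ∈ LocGrade 𝒜 S 0, (x ∈ Q ↔ x ∈ Q')) → Q = Q'

/-- The graded localization `S⁻¹A` is quasi-standard: it contains an invertible
homogeneous element of positive degree. -/
def LocQuasiStandard {A σ : Type*} [CommRing A] [SetLike σ A] (𝒜 : ℤ → σ)
    (S : Submonoid A) : Prop :=
  ∃ d : ℤ, 0 < d ∧ ∃ x ∈ LocGrade 𝒜 S d, IsUnit x

/-- The graded localization `S⁻¹A` is standard: it contains an invertible element of
degree `1`. -/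
def LocStandard {A σ : Type*} [CommRing A] [SetLike σ A] (𝒜 : ℤ → σ)
    (S : Submonoid A) : Prop :=
  ∃ x ∈ LocGrade 𝒜 S 1, IsUnit x

/-- The graded localization `S⁻¹A` is quasi-trivial: every homogeneous element of nonzero
degree is nilpotent. -/
def LocQuasiTrivial {A σ : Type*} [CommRing A] [SetLike σ A] (𝒜 : ℤ → σ)
    (S : Submonoid A) : Prop :=
  ∀ d : ℤ, d ≠ 0 → ∀ x ∈ LocGrade 𝒜 S d, IsNilpotent x

/-- The graded localization `S⁻¹A` is trivial: every homogeneous element of nonzero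
degree is zero. -/
def LocTrivial {A σ : Type*} [CommRing A] [SetLike σ A] (𝒜 : ℤ → σ)
    (S : Submonoid A) : Prop :=
  ∀ d : ℤ, d ≠ 0 → ∀ x ∈ LocGrade 𝒜 S d, x = 0

section Aux

variable {A : Type*} [CommRing A]

lemma aux_mem_of_eq (𝒜 : ℤ → AddSubgroup A) {i j : ℤ} (h : i = j) {x : A}
    (hx : x ∈ 𝒜 i) : x ∈ 𝒜 j := h ▸ hx

/-- If `n * m = t * t` then `n / t` is a unit of `A_t`. -/
lemma aux_isUnit {t n m : A} (h : n * m = t * t) :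
    IsUnit (Localization.mk n ⟨t, Submonoid.mem_powers t⟩ :
      Localization (Submonoid.powers t)) := by
  refine IsUnit.of_mul_eq_one (Localization.mk m ⟨t, Submonoid.mem_powers t⟩) ?_
  rw [Localization.mk_mul, h]
  exact Localization.mk_self
    (⟨t, Submonoid.mem_powers t⟩ * ⟨t, Submonoid.mem_powers t⟩ : Submonoid.powers t)

/-- Extraction: from a homogeneous unit `a/s` of degree `d` in `A_p` we get homogeneous
`a`, `s` outside `p`. -/
lemma aux_extract (𝒜 : ℤ → AddSubgroup A) [GradedRing 𝒜] (p : Ideal A) (hp : p.IsPrime)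
    (T : Submonoid A) (hT : (T : Set A) = {a : A | (∃ d : ℤ, a ∈ 𝒜 d) ∧ a ∉ p})
    {d : ℤ} {x : Localization T} (hx : x ∈ LocGrade 𝒜 T d) (hu : IsUnit x) :
    ∃ (i : ℤ) (a s : A), a ∈ 𝒜 (d + i) ∧ s ∈ 𝒜 i ∧ a ∉ p ∧ s ∉ p := by
  obtain ⟨a, s, i, ha, hs, rfl⟩ := hx
  obtain ⟨y, hy⟩ := isUnit_iff_exists_inv.mp hu
  obtain ⟨⟨b, u⟩, rfl⟩ : ∃ z : A × T, y = Localization.mk z.1 z.2 :=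
    Localization.induction_on y fun z => ⟨z, rfl⟩
  rw [Localization.mk_mul, ← Localization.mk_one (S := T), Localization.mk_eq_mk_iff,
    Localization.r_iff_exists] at hy
  obtain ⟨c, hc⟩ := hy
  push_cast at hc
  have hsT : (↑s : A) ∈ {a : A | (∃ d : ℤ, a ∈ 𝒜 d) ∧ a ∉ p} := by rw [← hT]; exact s.2
  have hsuc : (↑(s * u * c) : A) ∈ {a : A | (∃ d : ℤ, a ∈ 𝒜 d) ∧ a ∉ p} := by
    rw [← hT]; exact (s * u * c).2
  have hap : a ∉ p := by
    intro hap
    apply hsuc.2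
    have : (↑(s * u * c) : A) = a * (b * ↑c) := by push_cast; linear_combination -hc
    rw [this]
    exact Ideal.mul_mem_right _ _ hap
  exact ⟨i, a, s, ha, hs, hap, hsT.2⟩

/-- Construction: from homogeneous `a ∈ 𝒜 (d+i)`, `s ∈ 𝒜 i` outside `p`, the
localization at `t = a*s` has the homogeneous unit `a²/t` of degree `d`. -/
lemma aux_construct (𝒜 : ℤ → AddSubgroup A) [GradedRing 𝒜] (p : Ideal A) (hp : p.IsPrime)
    {d i : ℤ} {a s : A} (ha : a ∈ 𝒜 (d + i)) (hs : s ∈ 𝒜 i) (hap : a ∉ p) (hsp : s ∉ p) :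
    ∃ t : A, (∃ e : ℤ, t ∈ 𝒜 e) ∧ t ∉ p ∧
      ∃ x ∈ LocGrade 𝒜 (Submonoid.powers t) d, IsUnit x := by
  refine ⟨a * s, ⟨d + i + i, SetLike.mul_mem_graded ha hs⟩,
    fun h => ((hp.mem_or_mem h).elim hap hsp), ?_⟩
  refine ⟨Localization.mk (a * a) ⟨a * s, Submonoid.mem_powers _⟩,
    ⟨a * a, ⟨a * s, Submonoid.mem_powers _⟩, d + i + i,
      aux_mem_of_eq 𝒜 (by ring) (SetLike.mul_mem_graded ha ha),
      SetLike.mul_mem_graded ha hs, rfl⟩, aux_isUnit (m := s * s) (by ring)⟩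

/-- Degree-zero construction: additionally given `c ∈ 𝒜 (-(d+i+i))` with `a*s*c ∉ p`,
the element `t = a*s*c` has degree `0` and `A_t` has the homogeneous unit `a²c/t` of
degree `d`. -/
lemma aux_construct0 (𝒜 : ℤ → AddSubgroup A) [GradedRing 𝒜] (p : Ideal A) (hp : p.IsPrime)
    {d i : ℤ} {a s c : A} (ha : a ∈ 𝒜 (d + i)) (hs : s ∈ 𝒜 i) (hc : c ∈ 𝒜 (-(d + i + i)))
    (htp : a * s * c ∉ p) :
    ∃ t ∈ 𝒜 (0 : ℤ), t ∉ p ∧ ∃ x ∈ LocGrade 𝒜 (Submonoid.powers t) d, IsUnit x := by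
  have ht0 : a * s * c ∈ 𝒜 (0 : ℤ) :=
    aux_mem_of_eq 𝒜 (by ring)
      (SetLike.mul_mem_graded (SetLike.mul_mem_graded ha hs) hc)
  refine ⟨a * s * c, ht0, htp, ?_⟩
  refine ⟨Localization.mk (a * a * c) ⟨a * s * c, Submonoid.mem_powers _⟩,
    ⟨a * a * c, ⟨a * s * c, Submonoid.mem_powers _⟩, 0,
      aux_mem_of_eq 𝒜 (by ring)
        (SetLike.mul_mem_graded (SetLike.mul_mem_graded ha ha) hc), ht0, rfl⟩,
    aux_isUnit (m := s * s * c) (by ring)⟩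

/-- In a good graded ring, for any homogeneous `w ∉ p` of degree `m` there is a
homogeneous `c` of degree `-m` with `w * c ∉ p`. -/
lemma aux_exists_c (𝒜 : ℤ → AddSubgroup A) [GradedRing 𝒜] (p : Ideal A) (hp : p.IsPrime)
    (hph : p.IsHomogeneous 𝒜)
    (hgood : ∀ q q' : Ideal A, q.IsPrime → q'.IsPrime → q.IsHomogeneous 𝒜 →
      q'.IsHomogeneous 𝒜 → (∀ a ∈ 𝒜 (0 : ℤ), (a ∈ q ↔ a ∈ q')) → q = q')
    {m : ℤ} {w : A} (hw : w ∈ 𝒜 m) (hwp : w ∉ p) :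
    ∃ c ∈ 𝒜 (-m), w * c ∉ p := by
  by_contra hcon
  push_neg at hcon
  -- all of `𝒜 (-m)` lies in `p`
  have hsub : ∀ c ∈ 𝒜 (-m), c ∈ p := fun c hc =>
    ((hp.mem_or_mem (hcon c hc)).resolve_left hwp)
  -- the multiplicative set of degree-zero elements outside `p`
  let S₀ : Submonoid A :=
    { carrier := {x : A | x ∈ 𝒜 (0 : ℤ) ∧ x ∉ p}
      one_mem' := ⟨SetLike.one_mem_graded 𝒜, fun h => hp.ne_top (p.eq_top_iff_one.mpr h)⟩
      mul_mem' := fun {x y} hx hy =>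
        ⟨aux_mem_of_eq 𝒜 (by ring) (SetLike.mul_mem_graded hx.1 hy.1),
          fun h => (hp.mem_or_mem h).elim hx.2 hy.2⟩ }
  set I : Ideal A := p ⊔ Ideal.span (𝒜 m : Set A) with hI
  -- every degree-0 member of the span of `𝒜 m` lies in `p`
  have hspan0 : ∀ σ ∈ Ideal.span ((𝒜 m : Set A)),
      (DirectSum.decompose 𝒜 σ 0 : A) ∈ p := by
    intro σ hσ
    rw [Ideal.span, Submodule.mem_span_set'] at hσ
    obtain ⟨n, f, g, rfl⟩ := hσ
    rw [DirectSum.decompose_sum]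
    rw [DFinsupp.finset_sum_apply]
    rw [AddSubmonoidClass.coe_finset_sum]
    refine Ideal.sum_mem p fun j _ => ?_
    have hz : ((g j : A)) ∈ 𝒜 m := (g j).2
    have key : (DirectSum.decompose 𝒜 (f j * ↑(g j)) (-m + m) : A) =
        (DirectSum.decompose 𝒜 (f j) (-m) : A) * ↑(g j) :=
      DirectSum.coe_decompose_mul_add_of_right_mem 𝒜 hz
    have heq : (DirectSum.decompose 𝒜 (f j • ((g j : A))) 0 : A) =
        (DirectSum.decompose 𝒜 (f j) (-m) : A) * ↑(g j) := by
      rw [smul_eq_mul, ← key, neg_add_cancel]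
    rw [heq]
    exact Ideal.mul_mem_right _ p (hsub _ (SetLike.coe_mem _))
  -- `I` is disjoint from `S₀`
  have hdisj : Disjoint (I : Set A) (S₀ : Set A) := by
    rw [Set.disjoint_left]
    rintro x hxI ⟨hx0, hxp⟩
    apply hxp
    rw [hI] at hxI
    obtain ⟨π, hπ, σ, hσ, rfl⟩ := Submodule.mem_sup.mp hxI
    have hdec : (DirectSum.decompose 𝒜 (π + σ) 0 : A) = π + σ :=
      DirectSum.decompose_of_mem_same 𝒜 hx0
    rw [← hdec, DirectSum.decompose_add]
    rw [DirectSum.add_apply, AddSubgroup.coe_add]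
    exact p.add_mem (hph 0 hπ) (hspan0 σ hσ)
  obtain ⟨P, hPprime, hIP, hPdisj⟩ := Ideal.exists_le_prime_disjoint I S₀ hdisj
  -- the homogeneous core of `P`
  have hIhom : I.IsHomogeneous 𝒜 :=
    hph.sup (Ideal.homogeneous_span 𝒜 _ fun x hx => ⟨m, hx⟩)
  have hIcore : I ≤ (P.homogeneousCore 𝒜).toIdeal := by
    conv_lhs => rw [← hIhom.toIdeal_homogeneousCore_eq_self]
    exact Ideal.homogeneousCore_mono 𝒜 hIP
  have hq := hgood (P.homogeneousCore 𝒜).toIdeal p hPprime.homogeneousCore hp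
    (HomogeneousIdeal.isHomogeneous _) hph ?_
  · apply hwp
    rw [← hq]
    exact hIcore (le_sup_right (a := p) (Ideal.subset_span hw))
  · intro x hx0
    constructor
    · intro hxq
      by_contra hxp
      exact Set.disjoint_left.mp hPdisj ((Ideal.toIdeal_homogeneousCore_le 𝒜 P) hxq)
        ⟨hx0, hxp⟩
    · intro hxp
      exact hIcore (le_sup_left (b := Ideal.span (𝒜 m : Set A)) hxp)

end Aux

/-- If the graded localization `A_p` at a homogeneous prime `p` is
quasi-standard (resp. standard), then there is a homogeneous `t ∉ p` with `A_t`
quasi-standard (resp. standard); if moreover `A` is good, `t` can be chosen of degree `0`. -/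
theorem stmt_11 {A : Type*} [CommRing A] (𝒜 : ℤ → AddSubgroup A) [GradedRing 𝒜]
    (p : Ideal A) (hp : p.IsPrime) (hph : p.IsHomogeneous 𝒜) :
    ∀ T : Submonoid A, (T : Set A) = {a : A | (∃ d : ℤ, a ∈ 𝒜 d) ∧ a ∉ p} →
      ((LocQuasiStandard 𝒜 T →
          ∃ t : A, (∃ d : ℤ, t ∈ 𝒜 d) ∧ t ∉ p ∧ LocQuasiStandard 𝒜 (Submonoid.powers t)) ∧
       (LocStandard 𝒜 T →
          ∃ t : A, (∃ d : ℤ, t ∈ 𝒜 d) ∧ t ∉ p ∧ LocStandard 𝒜 (Submonoid.powers t)) ∧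
       ((∀ q q' : Ideal A, q.IsPrime → q'.IsPrime → q.IsHomogeneous 𝒜 → q'.IsHomogeneous 𝒜 →
           (∀ a ∈ 𝒜 0, (a ∈ q ↔ a ∈ q')) → q = q') →
         (LocQuasiStandard 𝒜 T →
            ∃ t ∈ 𝒜 0, t ∉ p ∧ LocQuasiStandard 𝒜 (Submonoid.powers t)) ∧
         (LocStandard 𝒜 T →
            ∃ t ∈ 𝒜 0, t ∉ p ∧ LocStandard 𝒜 (Submonoid.powers t)))) := by
  intro T hT
  refine ⟨?_, ?_, fun hgood => ⟨?_, ?_⟩⟩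
  · rintro ⟨d, hd, x, hx, hu⟩
    obtain ⟨i, a, s, ha, hs, hap, hsp⟩ := aux_extract 𝒜 p hp T hT hx hu
    obtain ⟨t, h1, h2, h3⟩ := aux_construct 𝒜 p hp ha hs hap hsp
    exact ⟨t, h1, h2, d, hd, h3⟩
  · rintro ⟨x, hx, hu⟩
    obtain ⟨i, a, s, ha, hs, hap, hsp⟩ := aux_extract 𝒜 p hp T hT hx hu
    exact aux_construct 𝒜 p hp ha hs hap hsp
  · rintro ⟨d, hd, x, hx, hu⟩
    obtain ⟨i, a, s, ha, hs, hap, hsp⟩ := aux_extract 𝒜 p hp T hT hx hu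
    obtain ⟨c, hc, htp⟩ := aux_exists_c 𝒜 p hp hph hgood
      (SetLike.mul_mem_graded ha hs)
      (fun h => (hp.mem_or_mem h).elim hap hsp)
    obtain ⟨t, h1, h2, h3⟩ := aux_construct0 𝒜 p hp ha hs hc htp
    exact ⟨t, h1, h2, d, hd, h3⟩
  · rintro ⟨x, hx, hu⟩
    obtain ⟨i, a, s, ha, hs, hap, hsp⟩ := aux_extract 𝒜 p hp T hT hx hu
    obtain ⟨c, hc, htp⟩ := aux_exists_c 𝒜 p hp hph hgood
      (SetLike.mul_mem_graded ha hs)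
      (fun h => (hp.mem_or_mem h).elim hap hsp)
    exact aux_construct0 𝒜 p hp ha hs hc htp
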